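/- Given k cubes Λ_L(u_1),…,Λ_L(u_k) in R^{nd} (sup-norm cubes of radius L centered at lattice points), there exist k̃ ≤ k pairwise disjoint cubes Λ_{l_1}(w_1),…,Λ_{l_{k̃}}(w_{k̃}) such that ⋃_{j} Λ_{l_j−7}(w_j) ⊇ ⋃_{r} Λ_L(u_r), each l_j is a positive integer multiple of (L+7), and Σ_j l_j ≤ k·(L+7). -/

import Mathlib

private def bZ {D : ℕ} (c : (Fin D → ℤ) × ℕ) : Set (Fin D → ℝ) :=
  Metric.ball (fun t => ((c.1 t : ℝ))) (c.2 : ℝ)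

private def sZ {D : ℕ} (c : (Fin D → ℤ) × ℕ) : Set (Fin D → ℝ) :=
  Metric.ball (fun t => ((c.1 t : ℝ))) ((c.2 : ℝ) - 7)

private lemma not_pairwise_exists {α : Type*} {R : α → α → Prop} :
    ∀ (l : List α), ¬ l.Pairwise R → ∃ a b t, l.Perm (a :: b :: t) ∧ ¬ R a b := by
  intro l
  induction l with
  | nil => intro h; exact absurd List.Pairwise.nil h
  | cons x xs ih =>
    intro h
    rw [List.pairwise_cons] at h
    by_cases hxs : xs.Pairwise R
    · have hx : ¬ ∀ a ∈ xs, R x a := fun ha => h ⟨ha, hxs⟩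
      push_neg at hx
      obtain ⟨b, hb, hRb⟩ := hx
      obtain ⟨s1, s2, rfl⟩ := List.append_of_mem hb
      exact ⟨x, b, s1 ++ s2, List.Perm.cons x List.perm_middle, hRb⟩
    · obtain ⟨a, b, t, hperm, hR⟩ := ih hxs
      refine ⟨a, b, x :: t, ?_, hR⟩
      have h1 : (x :: xs).Perm (x :: a :: b :: t) := List.Perm.cons x hperm
      have h2 : (x :: a :: b :: t).Perm (a :: x :: b :: t) := List.Perm.swap a x (b :: t)
      have h3 : (a :: x :: b :: t).Perm (a :: b :: x :: t) :=
        List.Perm.cons a (List.Perm.swap b x t)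
      exact (h1.trans h2).trans h3

private lemma merge_lemma {D : ℕ} (a b : (Fin D → ℤ) × ℕ) (h : (bZ a ∩ bZ b).Nonempty) :
    ∃ c : Fin D → ℤ, sZ a ∪ sZ b ⊆ sZ (c, a.2 + b.2) := by
  obtain ⟨x, hx1, hx2⟩ := h
  rw [bZ, Metric.mem_ball] at hx1 hx2
  -- pointwise real bound
  have hpt : ∀ t, |(a.1 t : ℝ) - b.1 t| < (a.2 : ℝ) + b.2 := by
    intro t
    have h1 : dist (x t) ((a.1 t : ℝ)) < (a.2 : ℝ) :=
      lt_of_le_of_lt (dist_le_pi_dist x (fun t => ((a.1 t : ℝ))) t) hx1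
    have h2 : dist (x t) ((b.1 t : ℝ)) < (b.2 : ℝ) :=
      lt_of_le_of_lt (dist_le_pi_dist x (fun t => ((b.1 t : ℝ))) t) hx2
    rw [Real.dist_eq] at h1 h2
    have h3 := abs_sub_le ((a.1 t : ℝ)) (x t) ((b.1 t : ℝ))
    rw [abs_sub_comm ((a.1 t : ℝ)) (x t)] at h3
    linarith
  have hZ : ∀ t, |a.1 t - b.1 t| < (a.2 : ℤ) + b.2 := by
    intro t
    have := hpt t
    exact_mod_cast (by push_cast; exact this : ((|a.1 t - b.1 t| : ℤ) : ℝ) < ((a.2 : ℤ) + b.2 : ℤ))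
  refine ⟨fun t => max (b.1 t - (a.2 : ℤ)) (min (a.1 t) (b.1 t + (a.2 : ℤ))), ?_⟩
  set c : Fin D → ℤ := fun t => max (b.1 t - (a.2 : ℤ)) (min (a.1 t) (b.1 t + (a.2 : ℤ))) with hc
  have hkey : ∀ t, |c t - b.1 t| ≤ (a.2 : ℤ) ∧ |c t - a.1 t| ≤ (b.2 : ℤ) := by
    intro t
    have h := hZ t
    rw [abs_lt] at h
    rw [abs_le, abs_le]
    simp only [hc]
    have hla : (0 : ℤ) ≤ (a.2 : ℤ) := Int.natCast_nonneg _
    have hlb : (0 : ℤ) ≤ (b.2 : ℤ) := Int.natCast_nonneg _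
    rcases max_cases (b.1 t - (a.2 : ℤ)) (min (a.1 t) (b.1 t + (a.2 : ℤ))) with ⟨he, h2⟩ | ⟨he, h2⟩ <;>
      rcases min_cases (a.1 t) (b.1 t + (a.2 : ℤ)) with ⟨he2, h3⟩ | ⟨he2, h3⟩ <;> omega
  have hda : dist (fun t => ((a.1 t : ℝ))) (fun t => ((c t : ℝ))) ≤ (b.2 : ℝ) := by
    rw [dist_pi_le_iff (by positivity)]
    intro t
    rw [Real.dist_eq]
    have := (hkey t).2
    rw [abs_sub_comm]
    exact_mod_cast (by push_cast; rfl : ((|c t - a.1 t| : ℤ) : ℝ) = |(c t : ℝ) - (a.1 t : ℝ)|) ▸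
      (by exact_mod_cast this : ((|c t - a.1 t| : ℤ) : ℝ) ≤ (b.2 : ℝ))
  have hdb : dist (fun t => ((b.1 t : ℝ))) (fun t => ((c t : ℝ))) ≤ (a.2 : ℝ) := by
    rw [dist_pi_le_iff (by positivity)]
    intro t
    rw [Real.dist_eq]
    have := (hkey t).1
    rw [abs_sub_comm]
    exact_mod_cast (by push_cast; rfl : ((|c t - b.1 t| : ℤ) : ℝ) = |(c t : ℝ) - (b.1 t : ℝ)|) ▸
      (by exact_mod_cast this : ((|c t - b.1 t| : ℤ) : ℝ) ≤ (a.2 : ℝ))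
  intro y hy
  rw [sZ, Metric.mem_ball]
  rcases hy with hy | hy <;> rw [sZ, Metric.mem_ball] at hy
  · calc dist y (fun t => ((c t : ℝ)))
        ≤ dist y (fun t => ((a.1 t : ℝ))) + dist (fun t => ((a.1 t : ℝ))) (fun t => ((c t : ℝ))) :=
          dist_triangle _ _ _
      _ < ((a.2 : ℝ) - 7) + (b.2 : ℝ) := by exact add_lt_add_of_lt_of_le hy hda
      _ ≤ ((a.2 + b.2 : ℕ) : ℝ) - 7 := by push_cast; linarith
  · calc dist y (fun t => ((c t : ℝ)))
        ≤ dist y (fun t => ((b.1 t : ℝ))) + dist (fun t => ((b.1 t : ℝ))) (fun t => ((c t : ℝ))) :=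
          dist_triangle _ _ _
      _ < ((b.2 : ℝ) - 7) + (a.2 : ℝ) := by exact add_lt_add_of_lt_of_le hy hdb
      _ ≤ ((a.2 + b.2 : ℕ) : ℝ) - 7 := by push_cast; linarith

private lemma aux_clustering (D L : ℕ) :
    ∀ (N : ℕ) (cs : List ((Fin D → ℤ) × ℕ)), cs.length ≤ N →
      (∀ c ∈ cs, ∃ m : ℕ, 0 < m ∧ c.2 = m * (L + 7)) →
      ∃ cs' : List ((Fin D → ℤ) × ℕ),
        cs'.length ≤ cs.length ∧
        List.Pairwise (fun a b => bZ a ∩ bZ b = ∅) cs' ∧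
        ((⋃ c ∈ cs, sZ c) ⊆ ⋃ c ∈ cs', sZ c) ∧
        (∀ c ∈ cs', ∃ m : ℕ, 0 < m ∧ c.2 = m * (L + 7)) ∧
        (cs'.map Prod.snd).sum ≤ (cs.map Prod.snd).sum := by
  intro N
  induction N with
  | zero =>
    intro cs hlen _
    rw [Nat.le_zero, List.length_eq_zero_iff] at hlen
    subst hlen
    exact ⟨[], le_refl _, List.Pairwise.nil, by simp, by simp, le_refl _⟩
  | succ N ih =>
    intro cs hlen hmul
    by_cases hp : List.Pairwise (fun a b => bZ a ∩ bZ b = ∅) cs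
    · exact ⟨cs, le_refl _, hp, subset_rfl, hmul, le_refl _⟩
    · obtain ⟨A, B, t, hperm, hR⟩ := not_pairwise_exists cs hp
      have hne : (bZ A ∩ bZ B).Nonempty := Set.nonempty_iff_ne_empty.mpr hR
      obtain ⟨c, hc⟩ := merge_lemma A B hne
      have hlen2 : cs.length = t.length + 2 := by rw [hperm.length_eq]; simp
      have hmemA : A ∈ cs := hperm.mem_iff.mpr (by simp)
      have hmemB : B ∈ cs := hperm.mem_iff.mpr (by simp)
      obtain ⟨m1, hm1, hA2⟩ := hmul A hmemA
      obtain ⟨m2, hm2, hB2⟩ := hmul B hmemB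
      have hmul' : ∀ d ∈ ((c, A.2 + B.2) :: t), ∃ m : ℕ, 0 < m ∧ d.2 = m * (L + 7) := by
        intro d hd
        rcases List.mem_cons.mp hd with hd | hd
        · subst hd
          exact ⟨m1 + m2, by omega, by simp [hA2, hB2, add_mul]⟩
        · exact hmul d (hperm.mem_iff.mpr (by simp [hd]))
      obtain ⟨cs', h1, h2, h3, h4, h5⟩ := ih ((c, A.2 + B.2) :: t) (by simp; omega) hmul'
      refine ⟨cs', by simp at h1 ⊢; omega, h2, ?_, h4, ?_⟩
      · intro y hy
        apply h3
        simp only [Set.mem_iUnion, exists_prop] at hy ⊢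
        obtain ⟨d, hd, hyd⟩ := hy
        rw [hperm.mem_iff] at hd
        rcases List.mem_cons.mp hd with hd | hd
        · exact ⟨(c, A.2 + B.2), by simp, hc (Or.inl (hd ▸ hyd))⟩
        rcases List.mem_cons.mp hd with hd | hd
        · exact ⟨(c, A.2 + B.2), by simp, hc (Or.inr (hd ▸ hyd))⟩
        · exact ⟨d, by simp [hd], hyd⟩
      · have hsum : (cs.map Prod.snd).sum = ((A :: B :: t).map Prod.snd).sum :=
          (hperm.map Prod.snd).sum_eq
        simp only [List.map_cons, List.sum_cons] at h5 hsum ⊢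
        omega

/-- Given `k` cubes `Λ_L(u_1),…,Λ_L(u_k)` in `ℝ^D` (open sup-norm
cubes of radius `L` centered at lattice points; here `D = nd`), there exist
`k' ≤ k` pairwise disjoint cubes `Λ_{l_j}(w_j)` such that
`⋃_j Λ_{l_j−7}(w_j) ⊇ ⋃_r Λ_L(u_r)`, each `l_j` is a positive integer multiple
of `L+7`, and `Σ_j l_j ≤ k·(L+7)`. -/
theorem stmt6 (D k L : ℕ) (hL : 1 ≤ L) (u : Fin k → Fin D → ℤ) :
    ∃ (k' : ℕ) (_ : k' ≤ k) (w : Fin k' → Fin D → ℤ) (l : Fin k' → ℕ),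
      (∀ i j : Fin k', i ≠ j →
        Metric.ball (fun t => ((w i t : ℝ))) (l i : ℝ) ∩
          Metric.ball (fun t => ((w j t : ℝ))) (l j : ℝ) = ∅) ∧
      ((⋃ r, Metric.ball (fun t => ((u r t : ℝ))) (L : ℝ)) ⊆
        ⋃ j, Metric.ball (fun t => ((w j t : ℝ))) ((l j : ℝ) - 7)) ∧
      (∀ j, ∃ m : ℕ, 0 < m ∧ l j = m * (L + 7)) ∧
      (∑ j, l j) ≤ k * (L + 7) := by
  set cs : List ((Fin D → ℤ) × ℕ) := List.ofFn (fun r => (u r, L + 7)) with hcs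
  have hmul : ∀ c ∈ cs, ∃ m : ℕ, 0 < m ∧ c.2 = m * (L + 7) := by
    intro c hc
    rw [hcs, List.mem_ofFn] at hc
    obtain ⟨r, hr⟩ := hc
    exact ⟨1, one_pos, by rw [← hr]; simp⟩
  obtain ⟨cs', h1, h2, h3, h4, h5⟩ := aux_clustering D L cs.length cs (le_refl _) hmul
  have hcslen : cs.length = k := by simp [hcs]
  refine ⟨cs'.length, by omega, fun j => (cs'.get j).1, fun j => (cs'.get j).2, ?_, ?_, ?_, ?_⟩
  · -- disjointness
    intro i j hij
    rw [List.pairwise_iff_get] at h2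
    rcases lt_or_gt_of_ne hij with h | h
    · exact h2 i j h
    · rw [Set.inter_comm]; exact h2 j i h
  · -- covering
    intro y hy
    simp only [Set.mem_iUnion] at hy ⊢
    obtain ⟨r, hr⟩ := hy
    have hyin : y ∈ ⋃ c ∈ cs, sZ c := by
      simp only [Set.mem_iUnion, exists_prop]
      refine ⟨(u r, L + 7), by rw [hcs, List.mem_ofFn]; exact ⟨r, rfl⟩, ?_⟩
      rw [sZ, Metric.mem_ball]
      rw [Metric.mem_ball] at hr
      push_cast
      linarith
    have := h3 hyin
    simp only [Set.mem_iUnion, exists_prop] at this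
    obtain ⟨d, hd, hyd⟩ := this
    obtain ⟨j, hj⟩ := List.get_of_mem hd
    refine ⟨j, ?_⟩
    rw [sZ, Metric.mem_ball] at hyd
    rw [Metric.mem_ball]
    rw [hj]
    exact hyd
  · -- multiples
    intro j
    exact h4 (cs'.get j) (cs'.get_mem j)
  · -- sum
    have e1 : (∑ j : Fin cs'.length, (cs'.get j).2) = (cs'.map Prod.snd).sum := by
      conv_rhs => rw [← List.ofFn_get cs']
      rw [List.map_ofFn, List.sum_ofFn]
      rfl
    have e2 : (cs.map Prod.snd).sum = k * (L + 7) := by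
      rw [hcs, List.map_ofFn, List.sum_ofFn]
      simp [Function.comp, mul_comm]
    show (∑ j : Fin cs'.length, (cs'.get j).2) ≤ k * (L + 7)
    omega
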